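/- ListFold-exp loss difference when inserting α into the top half (case a_{i+1} ≤ α ≤ a_i): with the notation Δℓ_k = ℓ(S_k^α) - ℓ(S_k), the total loss difference between placing α at rank position i+1 among the a's versus at the very top satisfies Δ L = Σ_{k=1}^{i} Δℓ_k ≤ 0, where ℓ(S) = log((Σ_{s∈S} e^{f_s})(Σ_{s∈S} e^{-f_s}) - |S|) and S_k^α = S_k \ {a_k} ∪ {α}. -/
import Mathlib


/-- `ℓ(S) = log((Σ_{s∈S} e^{f_s})(Σ_{s∈S} e^{-f_s}) - |S|)` for a multiset `S` of reals. -/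
noncomputable def ellLoss (M : Multiset ℝ) : ℝ :=
  Real.log ((M.map Real.exp).sum * (M.map fun x => Real.exp (-x)).sum - Multiset.card M)

lemma msum (s : Finset ℕ) (f : ℕ → ℝ) (g : ℝ → ℝ) :
    ((s.val.map f).map g).sum = ∑ j ∈ s, g (f j) := by
  rw [Multiset.map_map]; rfl

lemma PQ_ge_card (T : Multiset ℝ) :
    (Multiset.card T : ℝ) ≤ (T.map Real.exp).sum * (T.map fun x => Real.exp (-x)).sum := by
  induction T using Multiset.induction with
  | empty => simp
  | cons t T ih =>
    simp only [Multiset.map_cons, Multiset.sum_cons, Multiset.card_cons]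
    push_cast
    have h1 : (0:ℝ) ≤ (T.map Real.exp).sum := Multiset.sum_nonneg (by
      intro x hx; obtain ⟨y, _, rfl⟩ := Multiset.mem_map.mp hx; exact (Real.exp_pos y).le)
    have h2 : (0:ℝ) ≤ (T.map fun x => Real.exp (-x)).sum := Multiset.sum_nonneg (by
      intro x hx; obtain ⟨y, _, rfl⟩ := Multiset.mem_map.mp hx; exact (Real.exp_pos _).le)
    have h3 : Real.exp t * Real.exp (-t) = 1 := by rw [← Real.exp_add]; simp
    nlinarith [Real.exp_pos t, Real.exp_pos (-t)]

lemma ell_mono (T : Multiset ℝ) (hT : T ≠ 0) (x y : ℝ) (hxy : y ≤ x)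
    (hE : (T.map Real.exp).sum ≤ Real.exp (x + y) * (T.map fun t => Real.exp (-t)).sum) :
    ellLoss (y ::ₘ T) ≤ ellLoss (x ::ₘ T) := by
  set P := (T.map Real.exp).sum with hP
  set Q := (T.map fun t => Real.exp (-t)).sum with hQ
  obtain ⟨t0, ht0⟩ := Multiset.exists_mem_of_ne_zero hT
  have hQpos : 0 < Q := by
    have hmem : Real.exp (-t0) ∈ T.map fun t => Real.exp (-t) :=
      Multiset.mem_map.mpr ⟨t0, ht0, rfl⟩
    have := Multiset.single_le_sum (by
      intro u hu; obtain ⟨v, _, rfl⟩ := Multiset.mem_map.mp hu; exact (Real.exp_pos _).le)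
      _ hmem
    exact lt_of_lt_of_le (Real.exp_pos _) this
  have hPQ := PQ_ge_card T
  unfold ellLoss
  simp only [Multiset.map_cons, Multiset.sum_cons, Multiset.card_cons]
  push_cast
  have hyy : Real.exp y * Real.exp (-y) = 1 := by rw [← Real.exp_add]; simp
  have hxx : Real.exp x * Real.exp (-x) = 1 := by rw [← Real.exp_add]; simp
  have hxy1 : Real.exp (x + y) * Real.exp (-x) = Real.exp y := by
    rw [← Real.exp_add]; ring_nf
  have hxy2 : Real.exp (x + y) * Real.exp (-y) = Real.exp x := by
    rw [← Real.exp_add]; ring_nf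
  have hexy : Real.exp y ≤ Real.exp x := Real.exp_le_exp.mpr hxy
  have hPnn : (0:ℝ) ≤ P := Multiset.sum_nonneg (by
    intro u hu; obtain ⟨v, _, rfl⟩ := Multiset.mem_map.mp hu; exact (Real.exp_pos v).le)
  have hpos : 0 < (Real.exp y + P) * (Real.exp (-y) + Q) - (↑(Multiset.card T) + 1) := by
    nlinarith [Real.exp_pos y, Real.exp_pos (-y), mul_pos (Real.exp_pos y) hQpos,
      mul_nonneg (Real.exp_pos (-y)).le hPnn]
  apply Real.log_le_log hpos
  have hdiff : (Real.exp (-y) - Real.exp (-x)) * P ≤ (Real.exp (-y) - Real.exp (-x)) * (Real.exp (x+y) * Q) := by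
    apply mul_le_mul_of_nonneg_left hE
    have : Real.exp (-x) ≤ Real.exp (-y) := Real.exp_le_exp.mpr (by linarith)
    linarith
  nlinarith [hdiff]


/-- ListFold-exp loss difference when inserting `α` into the top half.  With
`a 1 ≥ … ≥ a n ≥ b n ≥ … ≥ b 1` (1-based), `S_k = {a_k,…,a_n,b_n,…,b_k}` and
`S_k^α = S_k ∖ {a_k} ∪ {α}`, if `a_{i+1} ≤ α ≤ a_i` (with `a_{n+1} := b n`), then
`ΔL = Σ_{k=1}^{i} (ℓ(S_k^α) - ℓ(S_k)) ≤ 0`. -/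
theorem listFold_exp_insert_top_half (n i : ℕ) (a b : ℕ → ℝ) (α : ℝ)
    (ha : ∀ j k, 1 ≤ j → j ≤ k → k ≤ n → a k ≤ a j)
    (hb : ∀ j k, 1 ≤ j → j ≤ k → k ≤ n → b j ≤ b k)
    (hab : b n ≤ a n) (hi1 : 1 ≤ i) (hi2 : i ≤ n)
    (hα₂ : α ≤ a i)
    (hα₁ : if i = n then b n ≤ α else a (i + 1) ≤ α) :
    ∑ k ∈ Finset.Icc 1 i,
      (ellLoss (α ::ₘ ((Finset.Icc (k+1) n).val.map a + (Finset.Icc k n).val.map b))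
        - ellLoss ((Finset.Icc k n).val.map a + (Finset.Icc k n).val.map b)) ≤ 0 := by
  have hbnα : b n ≤ α := by
    by_cases h : i = n
    · rw [if_pos h] at hα₁; exact hα₁
    · rw [if_neg h] at hα₁
      have hin : i + 1 ≤ n := Nat.succ_le_of_lt (lt_of_le_of_ne hi2 h)
      exact le_trans (le_trans hab (ha (i+1) n (by omega) hin le_rfl)) hα₁
  apply Finset.sum_nonpos
  intro k hk
  obtain ⟨hk1, hki⟩ := Finset.mem_Icc.mp hk
  have hkn : k ≤ n := le_trans hki hi2
  have hIcc : Finset.Icc k n = insert k (Finset.Icc (k+1) n) := by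
    ext j; simp [Finset.mem_Icc]; omega
  have hknot : k ∉ Finset.Icc (k+1) n := by simp
  set T : Multiset ℝ := (Finset.Icc (k+1) n).val.map a + (Finset.Icc k n).val.map b with hT
  have hSk : (Finset.Icc k n).val.map a + (Finset.Icc k n).val.map b = a k ::ₘ T := by
    rw [hT]
    have hv : (Finset.Icc k n).val = k ::ₘ (Finset.Icc (k+1) n).val := by
      rw [hIcc, Finset.insert_val, Multiset.ndinsert_of_notMem (by simp)]
    rw [hv]
    simp [Multiset.map_cons, Multiset.cons_add]
    exact Multiset.cons_swap _ _ _
  rw [hSk]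
  have hbkT : b k ∈ T := by
    rw [hT]
    refine Multiset.mem_add.mpr (Or.inr ?_)
    exact Multiset.mem_map.mpr ⟨k, by simp [Finset.mem_Icc.mpr ⟨le_rfl, hkn⟩, Finset.mem_val], rfl⟩
  have hTne : T ≠ 0 := fun h0 => by simp [h0] at hbkT
  have hαak : α ≤ a k := le_trans hα₂ (ha k i hk1 hki hi2)
  -- key estimate
  have hE : (T.map Real.exp).sum ≤ Real.exp (a k + α) * (T.map fun t => Real.exp (-t)).sum := by
    rw [hT]
    simp only [Multiset.map_add, Multiset.sum_add, msum]
    rw [mul_add, Finset.mul_sum, Finset.mul_sum]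
    simp only [← Real.exp_add]
    rw [hIcc, Finset.sum_insert hknot, Finset.sum_insert hknot]
    have h1 : Real.exp (b k) ≤ Real.exp (a k + α + -b k) := by
      apply Real.exp_le_exp.mpr
      have hb1 : b k ≤ b n := hb k n hk1 hkn le_rfl
      have hb2 : b k ≤ α := le_trans hb1 hbnα
      have hb3 : b k ≤ a k := le_trans hb1 (le_trans hab (ha k n hk1 hkn le_rfl))
      linarith
    have h2 : ∑ j ∈ Finset.Icc (k+1) n, (Real.exp (a j) + Real.exp (b j))
        ≤ ∑ j ∈ Finset.Icc (k+1) n, (Real.exp (a k + α + -a j) + Real.exp (a k + α + -b j)) := by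
      apply Finset.sum_le_sum
      intro j hj
      obtain ⟨hjk, hjn⟩ := Finset.mem_Icc.mp hj
      have hj1 : 1 ≤ j := by omega
      have haj : a j ≤ a k := ha k j hk1 (by omega) hjn
      have hbj : b j ≤ α := le_trans (hb j n hj1 hjn le_rfl) hbnα
      have c1 : Real.exp (a j) ≤ Real.exp (a k + α + -b j) :=
        Real.exp_le_exp.mpr (by linarith)
      have c2 : Real.exp (b j) ≤ Real.exp (a k + α + -a j) :=
        Real.exp_le_exp.mpr (by linarith)
      linarith
    rw [Finset.sum_add_distrib, Finset.sum_add_distrib] at h2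
    linarith
  have := ell_mono T hTne (a k) α hαak hE
  linarith
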